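/- Let f(t) = ∑_{α ∈ ℕ²} f̃_α ζ^{α₁} ζ̄^{α₂} be a convergent power series in ζ = t₁ + i t₂ and ζ̄ on the ball B(0, M⁻¹), with |f̃_α| ≤ C M^{|α|}. Then the series u_f(t) = ∑_{α ∈ ℕ²} f̃_α/(4(α₁+1)(α₂+1)) · ζ^{α₁+1} ζ̄^{α₂+1} converges on B(0, M⁻¹) and satisfies Δ u_f = f there. -/

import Mathlib

open Complex

/-- The planar Laplacian `Δ = ∂²/∂t₁² + ∂²/∂t₂²` of a function on `ℂ ≃ ℝ²`,
as the sum of the second directional derivatives in the directions `1` and `I`. -/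
noncomputable def laplacianC (u : ℂ → ℂ) (z : ℂ) : ℂ :=
  fderiv ℝ (fun w => fderiv ℝ u w 1) z 1 +
    fderiv ℝ (fun w => fderiv ℝ u w Complex.I) z Complex.I

section helpers

noncomputable def conjCLM : ℂ →L[ℝ] ℂ := Complex.conjCLE.toContinuousLinearMap

@[simp] lemma conjCLM_apply (v : ℂ) : conjCLM v = starRingEnd ℂ v := rfl

noncomputable def Pc (a b : ℕ) (w : ℂ) : ℂ := w ^ a * (starRingEnd ℂ w) ^ b

noncomputable def Dm (a b : ℕ) (w : ℂ) : ℂ →L[ℝ] ℂ :=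
  (((a : ℂ) * w ^ (a - 1) * (starRingEnd ℂ w) ^ b) • ContinuousLinearMap.id ℝ ℂ)
    + (((b : ℂ) * w ^ a * (starRingEnd ℂ w) ^ (b - 1)) • conjCLM)

lemma Dm_apply (a b : ℕ) (w v : ℂ) :
    Dm a b w v = (a : ℂ) * w ^ (a - 1) * (starRingEnd ℂ w) ^ b * v
      + (b : ℂ) * w ^ a * (starRingEnd ℂ w) ^ (b - 1) * (starRingEnd ℂ v) := by
  simp [Dm, smul_eq_mul]

lemma hasFDerivAt_conj (w : ℂ) : HasFDerivAt (fun w => starRingEnd ℂ w) conjCLM w :=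
  Complex.conjCLE.hasFDerivAt

lemma hasFDerivAt_Pc (a b : ℕ) (w : ℂ) : HasFDerivAt (Pc a b) (Dm a b w) w := by
  have h1 : HasFDerivAt (fun w : ℂ => w ^ a)
      ((((a : ℂ) * w ^ (a - 1)) • ContinuousLinearMap.id ℝ ℂ)) w := by
    have := ((hasDerivAt_pow a w).hasFDerivAt).restrictScalars ℝ
    refine this.congr_fderiv ?_
    ext v
    simp [smul_eq_mul]
    ring
  have h2 : HasFDerivAt (fun w : ℂ => (starRingEnd ℂ w) ^ b)
      (((((b : ℂ) * (starRingEnd ℂ w) ^ (b - 1)) • ContinuousLinearMap.id ℝ ℂ)).comp conjCLM) w := by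
    have hp := ((hasDerivAt_pow b (starRingEnd ℂ w)).hasFDerivAt).restrictScalars ℝ
    have hc := hasFDerivAt_conj w
    have := hp.comp w hc
    refine this.congr_fderiv ?_
    ext v
    simp [smul_eq_mul]
    ring
  have := h1.mul h2
  refine this.congr_fderiv ?_
  ext v
  simp [Dm, Pc, smul_eq_mul]
  ring

lemma norm_Dm_le (a b : ℕ) (w : ℂ) :
    ‖Dm a b w‖ ≤ (a : ℝ) * ‖w‖ ^ ((a - 1) + b) + (b : ℝ) * ‖w‖ ^ (a + (b - 1)) := by
  apply ContinuousLinearMap.opNorm_le_bound _ (by positivity)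
  intro v
  rw [Dm_apply]
  calc ‖(a : ℂ) * w ^ (a - 1) * (starRingEnd ℂ w) ^ b * v
        + (b : ℂ) * w ^ a * (starRingEnd ℂ w) ^ (b - 1) * (starRingEnd ℂ v)‖
      ≤ ‖(a : ℂ) * w ^ (a - 1) * (starRingEnd ℂ w) ^ b * v‖
        + ‖(b : ℂ) * w ^ a * (starRingEnd ℂ w) ^ (b - 1) * (starRingEnd ℂ v)‖ := norm_add_le _ _
    _ = (a : ℝ) * ‖w‖ ^ ((a - 1) + b) * ‖v‖ + (b : ℝ) * ‖w‖ ^ (a + (b - 1)) * ‖v‖ := by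
        simp [norm_mul, norm_pow, pow_add]
        ring
    _ = ((a : ℝ) * ‖w‖ ^ ((a - 1) + b) + (b : ℝ) * ‖w‖ ^ (a + (b - 1))) * ‖v‖ := by ring

lemma norm_Dm_le_ball₁ (a b : ℕ) {w : ℂ} {r : ℝ} (hw : ‖w‖ ≤ r) :
    ‖Dm a (b + 1) w‖ ≤ ((a : ℝ) + b + 1) * r ^ (a + b) := by
  have hr : 0 ≤ r := le_trans (norm_nonneg _) hw
  have h := norm_Dm_le a (b + 1) w
  have hW : ∀ n : ℕ, ‖w‖ ^ n ≤ r ^ n := fun n => pow_le_pow_left₀ (norm_nonneg _) hw n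
  cases a with
  | zero =>
      have h' : ‖Dm 0 (b + 1) w‖ ≤ ((b : ℝ) + 1) * ‖w‖ ^ b := by
        simpa using h
      have h2 : ((b : ℝ) + 1) * ‖w‖ ^ b ≤ ((b : ℝ) + 1) * r ^ b := by
        exact mul_le_mul_of_nonneg_left (hW b) (by positivity)
      simpa using h'.trans h2
  | succ a =>
      have e1 : (a + 1 - 1) + (b + 1) = (a + 1) + b := by omega
      have e2 : (a + 1) + (b + 1 - 1) = (a + 1) + b := by omega
      have e3 : (a + 1) + b = a + 1 + b := rfl
      rw [e1, e2] at h
      push_cast at h ⊢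
      have hWn := hW (a + 1 + b)
      have hwn : (0:ℝ) ≤ ‖w‖ ^ (a + 1 + b) := by positivity
      have e4 : a + 1 + b = a + (b + 1) := by omega
      rw [e4] at h hWn hwn ⊢
      nlinarith [h, hWn, hwn]

lemma norm_Dm_le_ball₂ (a b : ℕ) {w : ℂ} {r : ℝ} (hw : ‖w‖ ≤ r) :
    ‖Dm (a + 1) b w‖ ≤ ((a : ℝ) + b + 1) * r ^ (a + b) := by
  have hr : 0 ≤ r := le_trans (norm_nonneg _) hw
  have h := norm_Dm_le (a + 1) b w
  have hW : ∀ n : ℕ, ‖w‖ ^ n ≤ r ^ n := fun n => pow_le_pow_left₀ (norm_nonneg _) hw n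
  cases b with
  | zero =>
      have h' : ‖Dm (a + 1) 0 w‖ ≤ ((a : ℝ) + 1) * ‖w‖ ^ a := by
        simpa using h
      have h2 : ((a : ℝ) + 1) * ‖w‖ ^ a ≤ ((a : ℝ) + 1) * r ^ a := by
        exact mul_le_mul_of_nonneg_left (hW a) (by positivity)
      simpa using h'.trans h2
  | succ b =>
      have e1 : (a + 1 - 1) + (b + 1) = (a + 1) + b := by omega
      have e2 : (a + 1) + (b + 1 - 1) = (a + 1) + b := by omega
      rw [e1, e2] at h
      push_cast at h ⊢
      have hWn := hW (a + 1 + b)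
      have hwn : (0:ℝ) ≤ ‖w‖ ^ (a + 1 + b) := by positivity
      have e4 : a + 1 + b = a + (b + 1) := by omega
      rw [e4] at h hWn hwn
      nlinarith [h, hWn, hwn]

end helpers

lemma summable_lin {x : ℝ} (h0 : 0 ≤ x) (h1 : x < 1) :
    Summable (fun n : ℕ => ((n : ℝ) + 2) * x ^ n) := by
  have ha := summable_pow_mul_geometric_of_norm_lt_one (R := ℝ) 1 (r := x)
    (by rwa [Real.norm_eq_abs, _root_.abs_of_nonneg h0])
  have hb := (summable_geometric_of_lt_one h0 h1).mul_left 2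
  exact (ha.add hb).congr fun n => by push_cast; ring

lemma summable_quad {x : ℝ} (h0 : 0 ≤ x) (h1 : x < 1) :
    Summable (fun n : ℕ => ((n : ℝ) + 2) ^ 2 * x ^ n) := by
  have hx : ‖x‖ < 1 := by rwa [Real.norm_eq_abs, _root_.abs_of_nonneg h0]
  have ha := summable_pow_mul_geometric_of_norm_lt_one (R := ℝ) 2 (r := x) hx
  have hb := (summable_pow_mul_geometric_of_norm_lt_one (R := ℝ) 1 (r := x) hx).mul_left 4
  have hc := (summable_geometric_of_lt_one h0 h1).mul_left 4
  exact ((ha.add hb).add hc).congr fun n => by push_cast; ring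

lemma comb_bound (a b : ℕ) {w : ℂ} {r : ℝ} (hw : ‖w‖ ≤ r) :
    ‖((a : ℂ) + 1) • Dm a (b + 1) w‖ + ‖((b : ℂ) + 1) • Dm (a + 1) b w‖
      ≤ ((a : ℝ) + b + 2) * (((a : ℝ) + b + 1) * r ^ (a + b)) := by
  have h1 := norm_Dm_le_ball₁ a b hw
  have h2 := norm_Dm_le_ball₂ a b hw
  have e1 : ‖((a : ℂ) + 1)‖ = (a : ℝ) + 1 := by
    rw [show ((a : ℂ) + 1) = ((a + 1 : ℕ) : ℂ) by push_cast; ring, Complex.norm_natCast]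
    push_cast; ring
  have e2 : ‖((b : ℂ) + 1)‖ = (b : ℝ) + 1 := by
    rw [show ((b : ℂ) + 1) = ((b + 1 : ℕ) : ℂ) by push_cast; ring, Complex.norm_natCast]
    push_cast; ring
  have nA : ‖((a : ℂ) + 1) • Dm a (b + 1) w‖ ≤ ((a : ℝ) + 1) * ‖Dm a (b + 1) w‖ := by
    simpa [e1] using ContinuousLinearMap.opNorm_smul_le ((a : ℂ) + 1) (Dm a (b + 1) w)
  have nB : ‖((b : ℂ) + 1) • Dm (a + 1) b w‖ ≤ ((b : ℝ) + 1) * ‖Dm (a + 1) b w‖ := by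
    simpa [e2] using ContinuousLinearMap.opNorm_smul_le ((b : ℂ) + 1) (Dm (a + 1) b w)
  have c1 : ((a : ℝ) + 1) * ‖Dm a (b + 1) w‖ ≤ ((a : ℝ) + 1) * (((a : ℝ) + b + 1) * r ^ (a + b)) :=
    mul_le_mul_of_nonneg_left h1 (by positivity)
  have c2 : ((b : ℝ) + 1) * ‖Dm (a + 1) b w‖ ≤ ((b : ℝ) + 1) * (((a : ℝ) + b + 1) * r ^ (a + b)) :=
    mul_le_mul_of_nonneg_left h2 (by positivity)
  nlinarith [c1, c2, nA, nB]

/- If `f(ζ) = ∑_α f̃_α ζ^{α₁} ζ̄^{α₂}` with `|f̃_α| ≤ C M^{|α|}`, then the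
series `u_f(ζ) = ∑_α f̃_α/(4(α₁+1)(α₂+1)) ζ^{α₁+1} ζ̄^{α₂+1}` converges on the
ball `B(0, M⁻¹)` and satisfies `Δ u_f = f` there. -/
set_option maxHeartbeats 2000000 in
theorem interior_particular_solution (ftilde : ℕ × ℕ → ℂ) (C M : ℝ)
    (hC : 0 < C) (hM : 0 < M)
    (hbound : ∀ α : ℕ × ℕ, ‖ftilde α‖ ≤ C * M ^ (α.1 + α.2))
    (f uf : ℂ → ℂ)
    (hf : ∀ z : ℂ, f z =
      ∑' α : ℕ × ℕ, ftilde α * z ^ α.1 * (starRingEnd ℂ z) ^ α.2)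
    (huf : ∀ z : ℂ, uf z =
      ∑' α : ℕ × ℕ, ftilde α / (4 * (α.1 + 1) * (α.2 + 1))
        * z ^ (α.1 + 1) * (starRingEnd ℂ z) ^ (α.2 + 1)) :
    ∀ z : ℂ, ‖z‖ < M⁻¹ →
      Summable (fun α : ℕ × ℕ => ftilde α / (4 * (α.1 + 1) * (α.2 + 1))
        * z ^ (α.1 + 1) * (starRingEnd ℂ z) ^ (α.2 + 1)) ∧
      laplacianC uf z = f z := by
  intro z hzabs
  have hz : ‖z‖ < M⁻¹ := hzabs
  set r : ℝ := (‖z‖ + M⁻¹) / 2 with hrdef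
  have hzr : ‖z‖ < r := by rw [hrdef]; linarith
  have hrM : r < M⁻¹ := by rw [hrdef]; linarith
  have hr0 : 0 < r := lt_of_le_of_lt (norm_nonneg z) hzr
  have hx0 : (0 : ℝ) ≤ M * r := by positivity
  have hx1 : M * r < 1 := by
    have := (mul_lt_mul_iff_right₀ hM).2 hrM
    rwa [mul_inv_cancel₀ hM.ne'] at this
  set c : ℕ × ℕ → ℂ := fun α => ftilde α / (4 * (α.1 + 1) * (α.2 + 1)) with hcdef
  have hDne : ∀ α : ℕ × ℕ, (4 * ((α.1 : ℂ) + 1) * ((α.2 : ℂ) + 1)) ≠ 0 := by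
    intro α
    have h1 : ((α.1 : ℂ) + 1) ≠ 0 := by
      rw [show ((α.1 : ℂ) + 1) = ((α.1 + 1 : ℕ) : ℂ) by push_cast; ring]
      exact Nat.cast_ne_zero.mpr (Nat.succ_ne_zero α.1)
    have h2 : ((α.2 : ℂ) + 1) ≠ 0 := by
      rw [show ((α.2 : ℂ) + 1) = ((α.2 + 1 : ℕ) : ℂ) by push_cast; ring]
      exact Nat.cast_ne_zero.mpr (Nat.succ_ne_zero α.2)
    exact mul_ne_zero (mul_ne_zero (by norm_num) h1) h2
  have hftilde_eq : ∀ α : ℕ × ℕ,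
      ftilde α = c α * (4 * ((α.1 : ℂ) + 1) * ((α.2 : ℂ) + 1)) := by
    intro α
    rw [hcdef]
    exact (div_mul_cancel₀ _ (hDne α)).symm
  have hcabs : ∀ α : ℕ × ℕ, ‖c α‖ ≤ C * M ^ (α.1 + α.2) := by
    intro α
    have hd1 : (1 : ℝ) ≤ ‖(4 * ((α.1 : ℂ) + 1) * ((α.2 : ℂ) + 1))‖ := by
      rw [show (4 * ((α.1 : ℂ) + 1) * ((α.2 : ℂ) + 1))
          = ((4 * (α.1 + 1) * (α.2 + 1) : ℕ) : ℂ) by push_cast; ring, Complex.norm_natCast]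
      have : 0 < 4 * (α.1 + 1) * (α.2 + 1) := by positivity
      exact_mod_cast this
    have : ‖c α‖ ≤ ‖ftilde α‖ := by
      rw [hcdef]
      simp only [norm_div]
      exact div_le_self (norm_nonneg _) hd1
    exact this.trans (by exact hbound α)
  -- the families
  set g : ℕ × ℕ → ℂ → ℂ := fun α w => c α * Pc (α.1 + 1) (α.2 + 1) w with hgdef
  set g' : ℕ × ℕ → ℂ → ℂ →L[ℝ] ℂ := fun α w => c α • Dm (α.1 + 1) (α.2 + 1) w with hg'def
  set h1 : ℕ × ℕ → ℂ → ℂ := fun α w =>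
    c α * (((α.1 : ℂ) + 1) * Pc α.1 (α.2 + 1) w + ((α.2 : ℂ) + 1) * Pc (α.1 + 1) α.2 w)
    with hh1def
  set D1 : ℕ × ℕ → ℂ → ℂ →L[ℝ] ℂ := fun α w =>
    c α • (((α.1 : ℂ) + 1) • Dm α.1 (α.2 + 1) w + ((α.2 : ℂ) + 1) • Dm (α.1 + 1) α.2 w)
    with hD1def
  set hI : ℕ × ℕ → ℂ → ℂ := fun α w =>
    (c α * Complex.I) *
      (((α.1 : ℂ) + 1) * Pc α.1 (α.2 + 1) w - ((α.2 : ℂ) + 1) * Pc (α.1 + 1) α.2 w)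
    with hhIdef
  set DI : ℕ × ℕ → ℂ → ℂ →L[ℝ] ℂ := fun α w =>
    (c α * Complex.I) •
      (((α.1 : ℂ) + 1) • Dm α.1 (α.2 + 1) w - ((α.2 : ℂ) + 1) • Dm (α.1 + 1) α.2 w)
    with hDIdef
  have hg' : ∀ (α : ℕ × ℕ) (w : ℂ), HasFDerivAt (g α) (g' α w) w := fun α w =>
    (hasFDerivAt_Pc _ _ w).const_mul (c α)
  have hh1' : ∀ (α : ℕ × ℕ) (w : ℂ), HasFDerivAt (h1 α) (D1 α w) w := fun α w =>
    (((hasFDerivAt_Pc _ _ w).const_mul _).add ((hasFDerivAt_Pc _ _ w).const_mul _)).const_mul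
      (c α)
  have hhI' : ∀ (α : ℕ × ℕ) (w : ℂ), HasFDerivAt (hI α) (DI α w) w := fun α w =>
    (((hasFDerivAt_Pc _ _ w).const_mul _).sub ((hasFDerivAt_Pc _ _ w).const_mul _)).const_mul
      (c α * Complex.I)
  -- bounds
  set u1 : ℕ × ℕ → ℝ := fun α =>
    (C * r) * (((α.1 : ℝ) + 2) * (M * r) ^ α.1) * (((α.2 : ℝ) + 2) * (M * r) ^ α.2) with hu1def
  set u2 : ℕ × ℕ → ℝ := fun α =>
    C * (((α.1 : ℝ) + 2) ^ 2 * (M * r) ^ α.1) * (((α.2 : ℝ) + 2) ^ 2 * (M * r) ^ α.2) with hu2def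
  have hu1 : Summable u1 := by
    have := (((summable_lin hx0 hx1).mul_left (C * r)).mul_of_nonneg (summable_lin hx0 hx1)
      (fun n => by positivity) (fun n => by positivity))
    exact this.congr fun α => by simp only [hu1def]
  have hu2 : Summable u2 := by
    have := (((summable_quad hx0 hx1).mul_left C).mul_of_nonneg (summable_quad hx0 hx1)
      (fun n => by positivity) (fun n => by positivity))
    exact this.congr fun α => by simp only [hu2def]
  have hb1 : ∀ (α : ℕ × ℕ) (w : ℂ), w ∈ Metric.ball (0 : ℂ) r → ‖g' α w‖ ≤ u1 α := by
    intro α w hw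
    have hwr : ‖w‖ ≤ r := le_of_lt (mem_ball_zero_iff.1 hw)
    have hDm := norm_Dm_le_ball₁ (α.1 + 1) α.2 hwr
    have e' : α.1 + 1 + α.2 = α.1 + α.2 + 1 := by omega
    rw [e'] at hDm
    push_cast at hDm
    have step1 : ‖g' α w‖ ≤ (C * M ^ (α.1 + α.2)) *
        (((α.1 : ℝ) + α.2 + 2) * r ^ (α.1 + α.2 + 1)) := by
      have hle : ‖g' α w‖ ≤ ‖c α‖ * ‖Dm (α.1 + 1) (α.2 + 1) w‖ := by
        simp only [hg'def]
        exact ContinuousLinearMap.opNorm_smul_le _ _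
      refine hle.trans ?_
      exact mul_le_mul (hcabs α) (by linarith [hDm] :
        ‖Dm (α.1 + 1) (α.2 + 1) w‖ ≤ ((α.1 : ℝ) + α.2 + 2) * r ^ (α.1 + α.2 + 1))
        (norm_nonneg _) (by positivity)
    refine step1.trans ?_
    have key : ((α.1 : ℝ) + α.2 + 2) ≤ ((α.1 : ℝ) + 2) * ((α.2 : ℝ) + 2) := by
      have h1 : (0 : ℝ) ≤ (α.1 : ℝ) := Nat.cast_nonneg _
      have h2 : (0 : ℝ) ≤ (α.2 : ℝ) := Nat.cast_nonneg _
      nlinarith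
    have e : (C * r) * (((α.1 : ℝ) + 2) * (M * r) ^ α.1) * (((α.2 : ℝ) + 2) * (M * r) ^ α.2)
        = (C * M ^ (α.1 + α.2)) * ((((α.1 : ℝ) + 2) * ((α.2 : ℝ) + 2)) * r ^ (α.1 + α.2 + 1)) := by
      rw [mul_pow, mul_pow, pow_add, pow_succ]
      ring
    simp only [hu1def]
    rw [e]
    exact mul_le_mul_of_nonneg_left (mul_le_mul_of_nonneg_right key (by positivity))
      (by positivity)
  have hbD : ∀ (α : ℕ × ℕ) (w : ℂ), w ∈ Metric.ball (0 : ℂ) r →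
      ‖D1 α w‖ ≤ u2 α ∧ ‖DI α w‖ ≤ u2 α := by
    intro α w hw
    have hwr : ‖w‖ ≤ r := le_of_lt (mem_ball_zero_iff.1 hw)
    have hcomb := comb_bound α.1 α.2 hwr
    have key : ((α.1 : ℝ) + α.2 + 2) * (((α.1 : ℝ) + α.2 + 1) * r ^ (α.1 + α.2))
        ≤ (((α.1 : ℝ) + 2) ^ 2 * ((α.2 : ℝ) + 2) ^ 2) * r ^ (α.1 + α.2) := by
      have h1 : (0 : ℝ) ≤ (α.1 : ℝ) := Nat.cast_nonneg _
      have h2 : (0 : ℝ) ≤ (α.2 : ℝ) := Nat.cast_nonneg _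
      have hrp : (0 : ℝ) ≤ r ^ (α.1 + α.2) := by positivity
      have t2 : ((α.1 : ℝ) + α.2 + 2) ≤ ((α.1 : ℝ) + 2) * ((α.2 : ℝ) + 2) := by nlinarith
      have t2' : ((α.1 : ℝ) + α.2 + 1) ≤ ((α.1 : ℝ) + 2) * ((α.2 : ℝ) + 2) := by nlinarith
      have t3 : ((α.1 : ℝ) + α.2 + 2) * ((α.1 : ℝ) + α.2 + 1)
          ≤ (((α.1 : ℝ) + 2) * ((α.2 : ℝ) + 2)) * (((α.1 : ℝ) + 2) * ((α.2 : ℝ) + 2)) :=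
        mul_le_mul t2 t2' (by positivity) (by positivity)
      calc ((α.1 : ℝ) + α.2 + 2) * (((α.1 : ℝ) + α.2 + 1) * r ^ (α.1 + α.2))
          = (((α.1 : ℝ) + α.2 + 2) * ((α.1 : ℝ) + α.2 + 1)) * r ^ (α.1 + α.2) := by ring
        _ ≤ ((((α.1 : ℝ) + 2) * ((α.2 : ℝ) + 2)) * (((α.1 : ℝ) + 2) * ((α.2 : ℝ) + 2)))
              * r ^ (α.1 + α.2) := mul_le_mul_of_nonneg_right t3 hrp
        _ = (((α.1 : ℝ) + 2) ^ 2 * ((α.2 : ℝ) + 2) ^ 2) * r ^ (α.1 + α.2) := by ring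
    have hCM : ‖c α‖ * (((α.1 : ℝ) + α.2 + 2) * (((α.1 : ℝ) + α.2 + 1) * r ^ (α.1 + α.2)))
        ≤ u2 α := by
      have e : u2 α = (C * M ^ (α.1 + α.2)) *
          ((((α.1 : ℝ) + 2) ^ 2 * ((α.2 : ℝ) + 2) ^ 2) * r ^ (α.1 + α.2)) := by
        simp only [hu2def]
        rw [mul_pow, mul_pow, pow_add]
        ring
      rw [e]
      exact mul_le_mul (hcabs α) key (by positivity) (by positivity)
    constructor
    · have hle : ‖D1 α w‖ ≤ ‖c α‖ *
          ‖((α.1 : ℂ) + 1) • Dm α.1 (α.2 + 1) w + ((α.2 : ℂ) + 1) • Dm (α.1 + 1) α.2 w‖ := by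
        simp only [hD1def]
        exact ContinuousLinearMap.opNorm_smul_le _ _
      refine hle.trans (le_trans ?_ hCM)
      exact mul_le_mul_of_nonneg_left ((norm_add_le _ _).trans hcomb) (norm_nonneg _)
    · have hle : ‖DI α w‖ ≤ ‖c α * Complex.I‖ *
          ‖((α.1 : ℂ) + 1) • Dm α.1 (α.2 + 1) w - ((α.2 : ℂ) + 1) • Dm (α.1 + 1) α.2 w‖ := by
        simp only [hDIdef]
        exact ContinuousLinearMap.opNorm_smul_le _ _
      have hci : ‖c α * Complex.I‖ = ‖c α‖ := by rw [norm_mul, Complex.norm_I, mul_one]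
      rw [hci] at hle
      refine hle.trans (le_trans ?_ hCM)
      exact mul_le_mul_of_nonneg_left ((norm_sub_le _ _).trans hcomb) (norm_nonneg _)
  -- zero-point summability
  have hg0 : Summable (fun α : ℕ × ℕ => g α 0) := by
    refine summable_zero.congr fun α => ?_
    simp only [hgdef, Pc]; simp
  have hh10 : Summable (fun α : ℕ × ℕ => h1 α 0) := by
    refine summable_zero.congr fun α => ?_
    simp only [hh1def, Pc]; simp
  have hhI0 : Summable (fun α : ℕ × ℕ => hI α 0) := by
    refine summable_zero.congr fun α => ?_
    simp only [hhIdef, Pc]; simp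
  have hzs : z ∈ Metric.ball (0 : ℂ) r := mem_ball_zero_iff.2 hzr
  have h0s : (0 : ℂ) ∈ Metric.ball (0 : ℂ) r := Metric.mem_ball_self hr0
  have hconn : IsPreconnected (Metric.ball (0 : ℂ) r) := (convex_ball (0:ℂ) r).isPreconnected
  -- level 1
  have key1 : ∀ y ∈ Metric.ball (0 : ℂ) r,
      HasFDerivAt (fun w => ∑' α : ℕ × ℕ, g α w) (∑' α : ℕ × ℕ, g' α y) y := fun y hy =>
    hasFDerivAt_tsum_of_isPreconnected hu1 Metric.isOpen_ball hconn
      (fun α w _ => hg' α w) hb1 h0s hg0 hy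
  have hsum_g : Summable (fun α : ℕ × ℕ => g α z) :=
    summable_of_summable_hasFDerivAt_of_isPreconnected hu1 Metric.isOpen_ball hconn
      (fun α w _ => hg' α w) hb1 h0s hg0 hzs
  have hufg : uf = fun w => ∑' α : ℕ × ℕ, g α w := by
    funext w
    rw [huf w]
    exact tsum_congr fun α => by simp only [hgdef, hcdef, Pc]; ring
  refine ⟨hsum_g.congr fun α => by simp only [hgdef, hcdef, Pc]; ring, ?_⟩
  -- evaluation identities
  have happ1 : ∀ (α : ℕ × ℕ) (w : ℂ), g' α w 1 = h1 α w := by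
    intro α w
    simp only [hg'def, hh1def]
    simp only [ContinuousLinearMap.coe_smul', Pi.smul_apply, smul_eq_mul, Dm_apply,
      Nat.add_sub_cancel, map_one, Pc]
    push_cast
    ring
  have happI : ∀ (α : ℕ × ℕ) (w : ℂ), g' α w Complex.I = hI α w := by
    intro α w
    simp only [hg'def, hhIdef]
    simp only [ContinuousLinearMap.coe_smul', Pi.smul_apply, smul_eq_mul, Dm_apply,
      Nat.add_sub_cancel, Complex.conj_I, Pc]
    push_cast
    ring
  have hsumg' : ∀ w ∈ Metric.ball (0 : ℂ) r, Summable (fun α : ℕ × ℕ => g' α w) :=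
    fun w hw => Summable.of_norm_bounded hu1 (fun α => hb1 α w hw)
  -- eventual equality for direction 1
  have E1 : (fun w => fderiv ℝ uf w 1) =ᶠ[nhds z] fun w => ∑' α : ℕ × ℕ, h1 α w := by
    filter_upwards [Metric.isOpen_ball.mem_nhds hzs] with w hw
    rw [hufg, (key1 w hw).fderiv]
    rw [show ((∑' α : ℕ × ℕ, g' α w) 1)
        = (ContinuousLinearMap.apply ℝ ℂ (1 : ℂ)) (∑' α : ℕ × ℕ, g' α w) from rfl]
    rw [(ContinuousLinearMap.apply ℝ ℂ (1 : ℂ)).map_tsum (hsumg' w hw)]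
    exact tsum_congr fun α => happ1 α w
  have EI : (fun w => fderiv ℝ uf w Complex.I) =ᶠ[nhds z] fun w => ∑' α : ℕ × ℕ, hI α w := by
    filter_upwards [Metric.isOpen_ball.mem_nhds hzs] with w hw
    rw [hufg, (key1 w hw).fderiv]
    rw [show ((∑' α : ℕ × ℕ, g' α w) Complex.I)
        = (ContinuousLinearMap.apply ℝ ℂ Complex.I) (∑' α : ℕ × ℕ, g' α w) from rfl]
    rw [(ContinuousLinearMap.apply ℝ ℂ Complex.I).map_tsum (hsumg' w hw)]
    exact tsum_congr fun α => happI α w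
  -- level 2
  have key2 : HasFDerivAt (fun w => ∑' α : ℕ × ℕ, h1 α w) (∑' α : ℕ × ℕ, D1 α z) z :=
    hasFDerivAt_tsum_of_isPreconnected hu2 Metric.isOpen_ball hconn
      (fun α w _ => hh1' α w) (fun α w hw => (hbD α w hw).1) h0s hh10 hzs
  have keyI : HasFDerivAt (fun w => ∑' α : ℕ × ℕ, hI α w) (∑' α : ℕ × ℕ, DI α z) z :=
    hasFDerivAt_tsum_of_isPreconnected hu2 Metric.isOpen_ball hconn
      (fun α w _ => hhI' α w) (fun α w hw => (hbD α w hw).2) h0s hhI0 hzs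
  have H1 : HasFDerivAt (fun w => fderiv ℝ uf w 1) (∑' α : ℕ × ℕ, D1 α z) z :=
    key2.congr_of_eventuallyEq E1
  have HI : HasFDerivAt (fun w => fderiv ℝ uf w Complex.I) (∑' α : ℕ × ℕ, DI α z) z :=
    keyI.congr_of_eventuallyEq EI
  have hsumD1 : Summable (fun α : ℕ × ℕ => D1 α z) :=
    Summable.of_norm_bounded hu2 (fun α => (hbD α z hzs).1)
  have hsumDI : Summable (fun α : ℕ × ℕ => DI α z) :=
    Summable.of_norm_bounded hu2 (fun α => (hbD α z hzs).2)
  have S1 : Summable (fun α : ℕ × ℕ => D1 α z 1) :=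
    Summable.of_norm_bounded hu2 (fun α => by
      calc ‖D1 α z 1‖ ≤ ‖D1 α z‖ * ‖(1 : ℂ)‖ := ContinuousLinearMap.le_opNorm _ _
        _ = ‖D1 α z‖ := by simp
        _ ≤ u2 α := (hbD α z hzs).1)
  have SI : Summable (fun α : ℕ × ℕ => DI α z Complex.I) :=
    Summable.of_norm_bounded hu2 (fun α => by
      calc ‖DI α z Complex.I‖ ≤ ‖DI α z‖ * ‖Complex.I‖ := ContinuousLinearMap.le_opNorm _ _
        _ = ‖DI α z‖ := by simp
        _ ≤ u2 α := (hbD α z hzs).2)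
  rw [laplacianC, H1.fderiv, HI.fderiv]
  rw [show ((∑' α : ℕ × ℕ, D1 α z) 1)
      = (ContinuousLinearMap.apply ℝ ℂ (1 : ℂ)) (∑' α : ℕ × ℕ, D1 α z) from rfl,
    (ContinuousLinearMap.apply ℝ ℂ (1 : ℂ)).map_tsum hsumD1]
  rw [show ((∑' α : ℕ × ℕ, DI α z) Complex.I)
      = (ContinuousLinearMap.apply ℝ ℂ Complex.I) (∑' α : ℕ × ℕ, DI α z) from rfl,
    (ContinuousLinearMap.apply ℝ ℂ Complex.I).map_tsum hsumDI]
  simp only [ContinuousLinearMap.apply_apply]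
  rw [← Summable.tsum_add S1 SI, hf z]
  refine tsum_congr fun α => ?_
  simp only [hD1def, hDIdef]
  simp only [ContinuousLinearMap.apply_apply, ContinuousLinearMap.coe_smul', Pi.smul_apply,
    ContinuousLinearMap.add_apply, ContinuousLinearMap.sub_apply, smul_eq_mul,
    Dm_apply, Nat.add_sub_cancel, map_one, Complex.conj_I]
  rw [hftilde_eq α]
  set a := α.1
  set b := α.2
  push_cast
  linear_combination (c α * (((a : ℂ) + 1) *
      ((a : ℂ) * z ^ (a - 1) * (starRingEnd ℂ z) ^ (b + 1)
        - ((b : ℂ) + 1) * (z ^ a * (starRingEnd ℂ z) ^ b))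
      - ((b : ℂ) + 1) * (((a : ℂ) + 1) * (z ^ a * (starRingEnd ℂ z) ^ b)
        - (b : ℂ) * z ^ (a + 1) * (starRingEnd ℂ z) ^ (b - 1)))) * Complex.I_mul_I
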